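/- arXiv:1912.10304 — 5 statements merged into one kernel-verified Lean document; each statement's English description precedes it below -/
import Mathlib

section
/- Let d ≥ 2 be an integer. Then lim_{t → 0⁺} s₁(t) / t^{(d−1)/2} = (κ_{d−1}/(d·κ_d)) · 2^{(d−1)/2}. -/
open MeasureTheory Real Filter

/-- `kappa j` is the Lebesgue volume of the unit ball in `ℝ^j`. -/
noncomputable def kappa (j : ℕ) : ℝ :=
  (volume (Metric.ball (0 : EuclideanSpace ℝ (Fin j)) 1)).toReal

/-- Normalized surface area `s₁` of a spherical cap of height `h` (equals `1` for `h > 2`). -/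
noncomputable def s1 (d : ℕ) (h : ℝ) : ℝ :=
  if h ≤ 2 then
    (((d : ℝ) - 1) * kappa (d - 1) / ((d : ℝ) * kappa d)) *
      ∫ θ in (0:ℝ)..(Real.arccos (1 - h)), (Real.sin θ) ^ (d - 2)
  else 1

lemma sin_nonneg_aux {θ : ℝ} (h0 : 0 ≤ θ) (h1 : θ ≤ 1) : 0 ≤ Real.sin θ :=
  Real.sin_nonneg_of_nonneg_of_le_pi h0 (h1.trans (by linarith [Real.pi_gt_three]))

lemma int_sin_pow_le (n : ℕ) {x : ℝ} (hx : 0 ≤ x) (hx1 : x ≤ 1) :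
    (∫ θ in (0:ℝ)..x, Real.sin θ ^ n) ≤ x ^ (n+1) / (n+1) := by
  have h : (∫ θ in (0:ℝ)..x, Real.sin θ ^ n) ≤ ∫ θ in (0:ℝ)..x, θ ^ n := by
    apply intervalIntegral.integral_mono_on hx
      ((Real.continuous_sin.pow n).intervalIntegrable 0 x)
      ((continuous_pow n).intervalIntegrable 0 x)
    intro θ hθ
    exact pow_le_pow_left₀ (sin_nonneg_aux hθ.1 (hθ.2.trans hx1)) (Real.sin_le hθ.1) n
  rw [integral_pow] at h
  simpa using h

lemma sin_pow_lb (n : ℕ) {θ : ℝ} (h0 : 0 ≤ θ) (h1 : θ ≤ 1) :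
    θ ^ n - (n : ℝ)/4 * θ ^ (n+2) ≤ Real.sin θ ^ n := by
  rcases eq_or_lt_of_le h0 with rfl | hpos
  · rcases Nat.eq_zero_or_pos n with rfl | hn
    · norm_num
    · simp [Real.sin_zero, zero_pow hn.ne']
  · have hs : θ - θ^3/4 < Real.sin θ := by have := Real.sin_gt_sub_cube hpos; linarith [pow_pos hpos 3]
    have hcube : θ^3 ≤ θ := by nlinarith [mul_nonneg (mul_nonneg h0 (by linarith : (0:ℝ) ≤ 1-θ)) (by linarith : (0:ℝ) ≤ 1+θ)]
    have hnn : (0:ℝ) ≤ θ - θ^3/4 := by linarith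
    have h2 : (θ - θ^3/4) ^ n ≤ Real.sin θ ^ n := pow_le_pow_left₀ hnn hs.le n
    have hb : (1 : ℝ) + n * (-(θ^2/4)) ≤ (1 + (-(θ^2/4))) ^ n :=
      one_add_mul_le_pow (by nlinarith) n
    have h3 : θ ^ n * (1 + (n:ℝ) * (-(θ^2/4))) ≤ θ ^ n * (1 + (-(θ^2/4))) ^ n :=
      mul_le_mul_of_nonneg_left hb (pow_nonneg h0 n)
    have h4 : θ ^ n * (1 + (-(θ^2/4))) ^ n = (θ - θ^3/4) ^ n := by
      rw [← mul_pow]; ring_nf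
    calc θ ^ n - (n : ℝ)/4 * θ ^ (n+2) = θ ^ n * (1 + (n:ℝ) * (-(θ^2/4))) := by ring
      _ ≤ (θ - θ^3/4) ^ n := by rw [← h4]; exact h3
      _ ≤ Real.sin θ ^ n := h2

lemma int_sin_pow_ge (n : ℕ) {x : ℝ} (hx : 0 ≤ x) (hx1 : x ≤ 1) :
    x ^ (n+1) / (n+1) - (n:ℝ)/4 * (x ^ (n+3) / (n+3)) ≤ ∫ θ in (0:ℝ)..x, Real.sin θ ^ n := by
  have h : (∫ θ in (0:ℝ)..x, (θ ^ n - (n:ℝ)/4 * θ ^ (n+2)))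
      ≤ ∫ θ in (0:ℝ)..x, Real.sin θ ^ n := by
    apply intervalIntegral.integral_mono_on hx
      (((continuous_pow n).sub (continuous_const.mul (continuous_pow (n+2)))).intervalIntegrable 0 x)
      ((Real.continuous_sin.pow n).intervalIntegrable 0 x)
    intro θ hθ
    exact sin_pow_lb n hθ.1 (hθ.2.trans hx1)
  rw [intervalIntegral.integral_sub (f := fun θ : ℝ => θ ^ n)
      (g := fun θ : ℝ => (n:ℝ)/4 * θ^(n+2)) ((continuous_pow n).intervalIntegrable 0 x)
      ((continuous_const.mul (continuous_pow (n+2))).intervalIntegrable 0 x),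
    intervalIntegral.integral_const_mul, integral_pow, integral_pow] at h
  push_cast at h ⊢
  convert h using 2 <;> ring

lemma tendsto_int_sin_pow_div (n : ℕ) :
    Filter.Tendsto (fun x : ℝ => (∫ θ in (0:ℝ)..x, Real.sin θ ^ n) / x ^ (n+1))
      (nhdsWithin 0 (Set.Ioi 0)) (nhds (1/((n:ℝ)+1))) := by
  have hlow : Filter.Tendsto (fun x : ℝ => 1/((n:ℝ)+1) - (n:ℝ)/4 * (x^2/((n:ℝ)+3)))
      (nhdsWithin 0 (Set.Ioi 0)) (nhds (1/((n:ℝ)+1))) := by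
    have hc : Continuous fun x : ℝ => 1/((n:ℝ)+1) - (n:ℝ)/4 * (x^2/((n:ℝ)+3)) := by fun_prop
    have := (hc.tendsto 0).mono_left (nhdsWithin_le_nhds (s := Set.Ioi (0:ℝ)))
    simpa using this
  apply tendsto_of_tendsto_of_tendsto_of_le_of_le' hlow tendsto_const_nhds
  · filter_upwards [Ioo_mem_nhdsGT_of_mem (show (0:ℝ) ∈ Set.Ico 0 1 by norm_num)] with x hx
    have hxp : (0:ℝ) < x ^ (n+1) := pow_pos hx.1 _
    rw [le_div_iff₀ hxp]
    have h := int_sin_pow_ge n hx.1.le hx.2.le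
    have heq : (1/((n:ℝ)+1) - (n:ℝ)/4 * (x^2/((n:ℝ)+3))) * x ^ (n+1)
        = x ^ (n+1) / ((n:ℝ)+1) - (n:ℝ)/4 * (x ^ (n+3) / ((n:ℝ)+3)) := by
      have h1 : ((n:ℝ)+1) ≠ 0 := by positivity
      have h3 : ((n:ℝ)+3) ≠ 0 := by positivity
      field_simp
      ring
    rw [heq]
    exact h
  · filter_upwards [Ioo_mem_nhdsGT_of_mem (show (0:ℝ) ∈ Set.Ico 0 1 by norm_num)] with x hx
    have hxp : (0:ℝ) < x ^ (n+1) := pow_pos hx.1 _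
    rw [div_le_iff₀ hxp]
    have h := int_sin_pow_le n hx.1.le hx.2.le
    calc (∫ θ in (0:ℝ)..x, Real.sin θ ^ n) ≤ x ^ (n+1) / ((n:ℝ)+1) := h
      _ = 1/((n:ℝ)+1) * x ^ (n+1) := by ring

lemma one_sub_cos_eq (x : ℝ) : 1 - Real.cos x = 2 * Real.sin (x/2)^2 := by
  have h1 : Real.cos (2*(x/2)) = 2 * Real.cos (x/2)^2 - 1 := Real.cos_two_mul _
  have h2 := Real.sin_sq_add_cos_sq (x/2)
  have h3 : (2:ℝ)*(x/2) = x := by ring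
  rw [h3] at h1; linarith

lemma tendsto_sq_div_one_sub_cos :
    Filter.Tendsto (fun x : ℝ => x^2/(1 - Real.cos x))
      (nhdsWithin 0 (Set.Ioi 0)) (nhds 2) := by
  have key : Filter.Tendsto (fun x : ℝ => (1 - Real.cos x)/x^2)
      (nhdsWithin 0 (Set.Ioi 0)) (nhds (1/2)) := by
    have hlow : Filter.Tendsto (fun x : ℝ => 2*(1/2 - x^2/32)^2)
        (nhdsWithin 0 (Set.Ioi 0)) (nhds (1/2)) := by
      have hc : Continuous fun x : ℝ => 2*(1/2 - x^2/32)^2 := by fun_prop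
      have := (hc.tendsto 0).mono_left (nhdsWithin_le_nhds (s := Set.Ioi (0:ℝ)))
      norm_num at this
      exact this
    apply tendsto_of_tendsto_of_tendsto_of_le_of_le' hlow tendsto_const_nhds
    · filter_upwards [Ioo_mem_nhdsGT_of_mem (show (0:ℝ) ∈ Set.Ico 0 1 by norm_num)] with x hx
      have hx2 : (0:ℝ) < x^2 := pow_pos hx.1 2
      rw [le_div_iff₀ hx2, one_sub_cos_eq]
      have hs : x/2 - (x/2)^3/4 < Real.sin (x/2) := by
        have := Real.sin_gt_sub_cube (by linarith [hx.1] : (0:ℝ) < x/2)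
        linarith [pow_pos (by linarith [hx.1] : (0:ℝ) < x/2) 3]
      have ha : (0:ℝ) ≤ x * (1/2 - x^2/32) := by nlinarith [hx.1, hx.2]
      have hb : x/2 - (x/2)^3/4 = x * (1/2 - x^2/32) := by ring
      rw [hb] at hs
      have hsq : (x * (1/2 - x^2/32))^2 ≤ Real.sin (x/2)^2 := pow_le_pow_left₀ ha hs.le 2
      nlinarith [hsq]
    · filter_upwards [Ioo_mem_nhdsGT_of_mem (show (0:ℝ) ∈ Set.Ico 0 1 by norm_num)] with x hx
      have hx2 : (0:ℝ) < x^2 := pow_pos hx.1 2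
      rw [div_le_iff₀ hx2, one_sub_cos_eq]
      have hle : Real.sin (x/2) ≤ x/2 := Real.sin_le (by linarith [hx.1])
      have hnn : 0 ≤ Real.sin (x/2) := sin_nonneg_aux (by linarith [hx.1]) (by linarith [hx.2])
      nlinarith [hle, hnn]
  have := key.inv₀ (by norm_num)
  simp only [inv_div] at this
  norm_num at this
  exact this

/-- `s₁(t) ~ (κ_{d-1}/(d κ_d)) (2t)^{(d-1)/2}` as `t → 0⁺`. -/
theorem s1_asymptotics (d : ℕ) (hd : 2 ≤ d) :
    Tendsto (fun t : ℝ => s1 d t / t ^ (((d : ℝ) - 1) / 2))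
      (nhdsWithin 0 (Set.Ioi 0))
      (nhds (kappa (d - 1) / ((d : ℝ) * kappa d) * (2 : ℝ) ^ (((d : ℝ) - 1) / 2))) := by
  obtain ⟨n, hdn⟩ : ∃ n, d = n + 2 := ⟨d - 2, by omega⟩
  have hn2 : d - 2 = n := by omega
  have hn1 : d - 1 = n + 1 := by omega
  have hdR : ((d:ℝ) - 1) = ((n:ℝ) + 1) := by rw [hdn]; push_cast; ring
  set C : ℝ := ((d : ℝ) - 1) * kappa (d - 1) / ((d : ℝ) * kappa d) with hC
  set p : ℝ := ((d : ℝ) - 1) / 2 with hp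
  have hg : Tendsto (fun x : ℝ =>
      C * ((∫ θ in (0:ℝ)..x, Real.sin θ ^ n) / x ^ (n+1)) * (x^2/(1 - Real.cos x)) ^ p)
      (nhdsWithin 0 (Set.Ioi 0)) (nhds (C * (1/((n:ℝ)+1)) * 2 ^ p)) :=
    (tendsto_const_nhds.mul (tendsto_int_sin_pow_div n)).mul
      (tendsto_sq_div_one_sub_cos.rpow_const (Or.inl two_ne_zero))
  have hval : C * (1/((n:ℝ)+1)) * 2 ^ p = kappa (d - 1) / ((d:ℝ) * kappa d) * 2 ^ p := by
    have hne : ((n:ℝ) + 1) ≠ 0 := by positivity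
    congr 1
    rw [hC, hdR, div_mul_div_comm, mul_one, mul_comm ((d:ℝ)*kappa d) ((n:ℝ)+1),
      mul_div_mul_left _ _ hne]
  rw [hval] at hg
  have harc : Tendsto (fun t : ℝ => Real.arccos (1 - t))
      (nhdsWithin 0 (Set.Ioi 0)) (nhdsWithin 0 (Set.Ioi 0)) := by
    rw [tendsto_nhdsWithin_iff]
    constructor
    · have hc : Continuous fun t : ℝ => Real.arccos (1 - t) :=
        Real.continuous_arccos.comp (by fun_prop)
      have := (hc.tendsto 0).mono_left (nhdsWithin_le_nhds (s := Set.Ioi (0:ℝ)))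
      simpa [Real.arccos_one] using this
    · filter_upwards [self_mem_nhdsWithin] with t ht
      exact Real.arccos_pos.2 (by simp only [Set.mem_Ioi] at ht; linarith)
  have hcomp := hg.comp harc
  have heq : ∀ᶠ t in nhdsWithin (0:ℝ) (Set.Ioi 0),
      ((fun x : ℝ => C * ((∫ θ in (0:ℝ)..x, Real.sin θ ^ n) / x ^ (n+1))
          * (x^2/(1 - Real.cos x)) ^ p) ∘ (fun t : ℝ => Real.arccos (1 - t))) t
        = s1 d t / t ^ p := by
    filter_upwards [Ioo_mem_nhdsGT_of_mem (show (0:ℝ) ∈ Set.Ico 0 2 by norm_num)] with t ht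
    set x := Real.arccos (1 - t) with hx
    have hx0 : 0 < x := Real.arccos_pos.2 (by linarith [ht.1])
    have hcos : Real.cos x = 1 - t := Real.cos_arccos (by linarith [ht.2]) (by linarith [ht.1])
    have h1 : 1 - Real.cos x = t := by rw [hcos]; ring
    have hs1 : s1 d t = C * ∫ θ in (0:ℝ)..x, Real.sin θ ^ n := by
      simp only [s1, hn2, ← hx]
      rw [if_pos (show t ≤ 2 by linarith [ht.2])]
    have hx2p : (x^2 : ℝ) ^ p = x ^ (n+1) := by
      rw [← Real.rpow_natCast x 2, ← Real.rpow_mul hx0.le,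
        show ((2:ℕ):ℝ) * p = ((n+1:ℕ):ℝ) by rw [hp, hdR]; push_cast; ring]
      exact Real.rpow_natCast x (n+1)
    have hdiv : ((x^2 : ℝ) / t) ^ p = x ^ (n+1) / t ^ p := by
      rw [Real.div_rpow (sq_nonneg x) ht.1.le, hx2p]
    have hxne : x ^ (n+1) ≠ 0 := (pow_pos hx0 _).ne'
    show C * ((∫ θ in (0:ℝ)..x, Real.sin θ ^ n) / x ^ (n+1)) * (x^2/(1 - Real.cos x)) ^ p
        = s1 d t / t ^ p
    rw [h1, hdiv, hs1]
    field_simp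
  exact (Tendsto.congr' heq hcomp :)
end

section
/- Let d ≥ 2 be an integer. For every t ∈ [0,2], (κ_{d−1}/(2·π^{d−2}·d·κ_d)) · (2t)^{(d−1)/2} ≤ s₁(t) ≤ (κ_{d−1}/(d·κ_d)) · (8t)^{(d−1)/2}. -/
open MeasureTheory Real Filter

lemma kappa_pos (j : ℕ) : 0 < kappa j :=
  ENNReal.toReal_pos (Metric.measure_ball_pos volume 0 one_pos).ne' measure_ball_lt_top.ne

lemma sqrt_two_le_two : Real.sqrt 2 ≤ 2 := by
  nlinarith [Real.sq_sqrt (show (0:ℝ) ≤ 2 by norm_num), Real.sqrt_nonneg 2]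

/-- two-sided bounds for `s₁(t)` on `[0,2]`. -/
theorem s1_bounds (d : ℕ) (hd : 2 ≤ d) (t : ℝ) (ht0 : 0 ≤ t) (ht2 : t ≤ 2) :
    kappa (d - 1) / (2 * π ^ (d - 2) * ((d : ℝ) * kappa d)) * (2 * t) ^ (((d : ℝ) - 1) / 2)
        ≤ s1 d t ∧
      s1 d t ≤ kappa (d - 1) / ((d : ℝ) * kappa d) * (8 * t) ^ (((d : ℝ) - 1) / 2) := by
  obtain ⟨n, rfl⟩ : ∃ n, d = n + 2 := ⟨d - 2, by omega⟩
  clear hd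
  have hsub1 : n + 2 - 1 = n + 1 := rfl
  have hsub2 : n + 2 - 2 = n := rfl
  have hπpos := Real.pi_pos
  have hπ3 := Real.pi_gt_three
  have hnpos : (0:ℝ) < (n:ℝ) + 1 := by positivity
  set α := Real.arccos (1 - t) with hαdef
  have hα0 : 0 ≤ α := Real.arccos_nonneg _
  have hαπ : α ≤ π := Real.arccos_le_pi _
  have hcos : Real.cos α = 1 - t := Real.cos_arccos (by linarith) (by linarith)
  have hsin0 : 0 ≤ Real.sin α := Real.sin_nonneg_of_nonneg_of_le_pi hα0 hαπ
  have hsin_sq : Real.sin α ^ 2 = t * (2 - t) := by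
    have h1 := Real.sin_sq_add_cos_sq α
    nlinarith [hcos]
  have hint : ∀ a b : ℝ, IntervalIntegrable (fun θ => Real.sin θ ^ n) volume a b :=
    fun a b => (Real.continuous_sin.pow n).intervalIntegrable a b
  set I := ∫ θ in (0:ℝ)..α, Real.sin θ ^ n with hIdef
  -- key lower bound on partial integrals
  have key : ∀ b : ℝ, 0 ≤ b → b ≤ π →
      Real.sin b ^ (n+1) / ((n:ℝ)+1) ≤ ∫ θ in (0:ℝ)..b, Real.sin θ ^ n := by
    intro b hb0 hbπ
    have h1 : (∫ θ in (0:ℝ)..b, Real.sin θ ^ n * Real.cos θ)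
        = Real.sin b ^ (n+1) / ((n:ℝ)+1) := by
      have h := integral_sin_pow_mul_cos_pow_odd (a := (0:ℝ)) (b := b) n 0
      simpa [integral_pow] using h
    have h2 : (∫ θ in (0:ℝ)..b, Real.sin θ ^ n * Real.cos θ)
        ≤ ∫ θ in (0:ℝ)..b, Real.sin θ ^ n := by
      apply intervalIntegral.integral_mono_on hb0
        (((Real.continuous_sin.pow n).mul Real.continuous_cos).intervalIntegrable 0 b)
        (hint 0 b)
      intro x hx
      have hs : 0 ≤ Real.sin x :=
        Real.sin_nonneg_of_nonneg_of_le_pi hx.1 (hx.2.trans hbπ)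
      exact mul_le_of_le_one_right (pow_nonneg hs n) (Real.cos_le_one x)
    linarith
  -- lower bound on (n+1) * I
  have hIlow : (Real.sqrt (2*t)) ^ (n+1) / (2 * π ^ n) ≤ ((n:ℝ)+1) * I := by
    rcases le_or_gt t 1 with h1 | h1
    · have hA := key α hα0 hαπ
      have hsinα : Real.sin α = Real.sqrt (t * (2 - t)) := by
        rw [← hsin_sq, Real.sqrt_sq hsin0]
      have hs : Real.sqrt t ≤ Real.sin α := by
        rw [hsinα]
        exact Real.sqrt_le_sqrt (by nlinarith)
      have hB : (Real.sqrt t) ^ (n+1) ≤ ((n:ℝ)+1) * I := by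
        have h2 : Real.sin α ^ (n+1) ≤ ((n:ℝ)+1) * I := by
          rw [div_le_iff₀ hnpos] at hA
          linarith [hA, mul_comm I ((n:ℝ)+1)]
        calc (Real.sqrt t) ^ (n+1) ≤ Real.sin α ^ (n+1) :=
              pow_le_pow_left₀ (Real.sqrt_nonneg t) hs _
          _ ≤ ((n:ℝ)+1) * I := h2
      have h2pi : (Real.sqrt 2) ^ (n+1) ≤ 2 * π ^ n := by
        have ha : (Real.sqrt 2) ^ n ≤ π ^ n :=
          pow_le_pow_left₀ (Real.sqrt_nonneg 2) (by linarith [sqrt_two_le_two]) n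
        calc (Real.sqrt 2) ^ (n+1) = Real.sqrt 2 * (Real.sqrt 2) ^ n := by ring
          _ ≤ 2 * π ^ n := by
              apply mul_le_mul sqrt_two_le_two ha (by positivity) (by norm_num)
      rw [div_le_iff₀ (by positivity)]
      have hsplit : Real.sqrt (2*t) = Real.sqrt 2 * Real.sqrt t :=
        Real.sqrt_mul (by norm_num) t
      calc (Real.sqrt (2*t)) ^ (n+1)
          = (Real.sqrt 2) ^ (n+1) * (Real.sqrt t) ^ (n+1) := by rw [hsplit, mul_pow]
        _ ≤ (2 * π ^ n) * (Real.sqrt t) ^ (n+1) :=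
            mul_le_mul_of_nonneg_right h2pi (by positivity)
        _ ≤ (2 * π ^ n) * (((n:ℝ)+1) * I) := by
            apply mul_le_mul_of_nonneg_left hB (by positivity)
        _ = ((n:ℝ)+1) * I * (2 * π ^ n) := by ring
    · have hπ2 : π/2 ≤ α := by
        by_contra h
        push_neg at h
        have := Real.cos_pos_of_mem_Ioo ⟨by linarith, h⟩
        rw [hcos] at this; linarith
      have hsplit : I = (∫ θ in (0:ℝ)..(π/2), Real.sin θ ^ n)
          + ∫ θ in (π/2)..α, Real.sin θ ^ n :=
        (intervalIntegral.integral_add_adjacent_intervals (hint 0 (π/2)) (hint (π/2) α)).symm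
      have h2nd : 0 ≤ ∫ θ in (π/2)..α, Real.sin θ ^ n := by
        apply intervalIntegral.integral_nonneg hπ2
        intro x hx
        exact pow_nonneg (Real.sin_nonneg_of_nonneg_of_le_pi
          (le_trans (by positivity) hx.1) (hx.2.trans hαπ)) n
      have h1st := key (π/2) (by positivity) (by linarith)
      rw [Real.sin_pi_div_two, one_pow] at h1st
      have hI1 : 1 ≤ ((n:ℝ)+1) * I := by
        have hIge : 1/((n:ℝ)+1) ≤ I := by rw [hsplit]; linarith
        calc (1:ℝ) = ((n:ℝ)+1) * (1/((n:ℝ)+1)) := by field_simp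
          _ ≤ ((n:ℝ)+1) * I := mul_le_mul_of_nonneg_left hIge hnpos.le
      have h2t : Real.sqrt (2*t) ≤ 2 := by
        nlinarith [Real.sq_sqrt (show (0:ℝ) ≤ 2*t by linarith), Real.sqrt_nonneg (2*t)]
      have hnum : (Real.sqrt (2*t)) ^ (n+1) ≤ 2 * π ^ n := by
        calc (Real.sqrt (2*t)) ^ (n+1) ≤ 2 ^ (n+1) :=
            pow_le_pow_left₀ (Real.sqrt_nonneg _) h2t _
          _ = 2 * 2 ^ n := by ring
          _ ≤ 2 * π ^ n := by
              apply mul_le_mul_of_nonneg_left _ (by norm_num)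
              exact pow_le_pow_left₀ (by norm_num) (by linarith) n
      calc (Real.sqrt (2*t)) ^ (n+1) / (2 * π ^ n) ≤ 1 := by
            rw [div_le_one (by positivity)]; exact hnum
        _ ≤ ((n:ℝ)+1) * I := hI1
  -- upper bound on (n+1) * I
  have hα_le : α ≤ Real.sqrt (8*t) := by
    have hcb := Real.cos_le_one_sub_mul_cos_sq (x := α) (by rwa [abs_of_nonneg hα0])
    rw [hcos] at hcb
    have h1 : 2/π^2 * α^2 ≤ t := by linarith
    have hα2 : α^2 ≤ 8*t := by
      rw [div_mul_eq_mul_div, div_le_iff₀ (by positivity)] at h1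
      have hπ16 : π^2 ≤ 16 := by nlinarith [Real.pi_le_four]
      nlinarith [mul_le_mul_of_nonneg_left hπ16 ht0]
    calc α = Real.sqrt (α^2) := (Real.sqrt_sq hα0).symm
      _ ≤ Real.sqrt (8*t) := Real.sqrt_le_sqrt hα2
  have hIup : ((n:ℝ)+1) * I ≤ (Real.sqrt (8*t)) ^ (n+1) := by
    have hmono : I ≤ ∫ θ in (0:ℝ)..α, θ^n := by
      apply intervalIntegral.integral_mono_on hα0 (hint 0 α)
        ((continuous_pow n).intervalIntegrable 0 α)
      intro x hx
      exact pow_le_pow_left₀ (Real.sin_nonneg_of_nonneg_of_le_pi hx.1 (hx.2.trans hαπ))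
        (Real.sin_le hx.1) n
    rw [integral_pow] at hmono
    have : ((n:ℝ)+1) * I ≤ α ^ (n+1) := by
      rw [div_eq_mul_inv] at hmono
      calc ((n:ℝ)+1) * I ≤ ((n:ℝ)+1) * ((α ^ (n+1) - 0 ^ (n+1)) * ((n:ℝ)+1)⁻¹) := by
            push_cast at hmono ⊢
            exact mul_le_mul_of_nonneg_left hmono hnpos.le
        _ = α ^ (n+1) := by
            field_simp
            simp
    exact this.trans (pow_le_pow_left₀ hα0 hα_le _)
  -- rpow conversion
  have hrpow : ∀ x : ℝ, 0 ≤ x →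
      x ^ ((((n+2:ℕ):ℝ) - 1)/2) = Real.sqrt x ^ (n+1) := by
    intro x hx
    rw [Real.sqrt_eq_rpow, ← Real.rpow_natCast (x ^ ((1:ℝ)/2)) (n+1), ← Real.rpow_mul hx]
    congr 1
    push_cast
    ring
  -- unfold s1
  have hs1 : s1 (n+2) t
      = (((n:ℝ)+1) * kappa (n+1) / (((n:ℝ)+2) * kappa (n+2))) * I := by
    rw [s1, if_pos ht2, hsub1, hsub2]
    push_cast
    ring
  set K := kappa (n+1) with hK
  set L := ((n:ℝ)+2) * kappa (n+2) with hL
  have hKpos : 0 < K := kappa_pos _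
  have hLpos : 0 < L := by
    have := kappa_pos (n+2); positivity
  constructor
  · rw [hsub1, hsub2, hs1]
    rw [hrpow (2*t) (by linarith)]
    have e1 : K / (2 * π ^ n * (((n+2:ℕ):ℝ) * kappa (n+2))) * Real.sqrt (2*t) ^ (n+1)
        = (K / L) * (Real.sqrt (2*t) ^ (n+1) / (2 * π ^ n)) := by
      rw [hL]
      push_cast
      rw [show (2 * π ^ n * (((n:ℝ) + 2) * kappa (n+2))) = (((n:ℝ) + 2) * kappa (n+2)) * (2 * π ^ n) from by ring, ← div_div]
      ring
    rw [e1]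
    calc (K / L) * (Real.sqrt (2*t) ^ (n+1) / (2 * π ^ n))
        ≤ (K / L) * (((n:ℝ)+1) * I) := by
          apply mul_le_mul_of_nonneg_left hIlow (by positivity)
      _ = ((n:ℝ)+1) * K / L * I := by ring
  · rw [hsub1, hs1]
    rw [hrpow (8*t) (by linarith)]
    have e2 : K / (((n+2:ℕ):ℝ) * kappa (n+2)) * Real.sqrt (8*t) ^ (n+1)
        = (K / L) * (Real.sqrt (8*t) ^ (n+1)) := by
      rw [hL]; push_cast; ring
    rw [e2]
    calc ((n:ℝ)+1) * K / L * I = (K / L) * (((n:ℝ)+1) * I) := by ring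
      _ ≤ (K / L) * (Real.sqrt (8*t) ^ (n+1)) :=
          mul_le_mul_of_nonneg_left hIup (by positivity)
end

section
/- Let d ≥ 2 be an integer. For every φ ∈ [0, π], ∫₀^φ (sin θ)^{d−2} dθ ≥ φ^{d−1} / (2 · π^{d−2} · (d−1)). -/
open Real

lemma aux_sin_pow (n : ℕ) (p : ℝ) (h0 : 0 ≤ p) (h : p ≤ π / 2) :
    (2 / π) ^ n * p ^ (n + 1) / (n + 1) ≤ ∫ θ in (0:ℝ)..p, (Real.sin θ) ^ n := by
  have hmono : ∫ θ in (0:ℝ)..p, (2 / π * θ) ^ n ≤ ∫ θ in (0:ℝ)..p, (Real.sin θ) ^ n := by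
    apply intervalIntegral.integral_mono_on h0
    · exact (Continuous.intervalIntegrable (by continuity) _ _)
    · exact (Continuous.intervalIntegrable (by continuity) _ _)
    · intro θ hθ
      have h1 : 0 ≤ θ := hθ.1
      have h2 : θ ≤ π / 2 := le_trans hθ.2 h
      have := Real.mul_le_sin h1 h2
      exact pow_le_pow_left₀ (by positivity) this n
  have hcomp : ∫ θ in (0:ℝ)..p, (2 / π * θ) ^ n = (2 / π) ^ n * p ^ (n + 1) / (n + 1) := by
    simp_rw [mul_pow]
    rw [intervalIntegral.integral_const_mul, integral_pow]
    ring
  rw [← hcomp]; exact hmono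

/-- for `φ ∈ [0,π]`, `∫₀^φ sin^{d-2} θ dθ ≥ φ^{d-1}/(2 π^{d-2} (d-1))`. -/
theorem integral_sin_pow_lower_bound (d : ℕ) (hd : 2 ≤ d) (p : ℝ) (hp0 : 0 ≤ p) (hpπ : p ≤ π) :
    p ^ (d - 1) / (2 * π ^ (d - 2) * ((d : ℝ) - 1)) ≤
      ∫ θ in (0:ℝ)..p, (Real.sin θ) ^ (d - 2) := by
  obtain ⟨n, rfl⟩ : ∃ n, d = n + 2 := ⟨d - 2, by omega⟩
  have hn1 : n + 2 - 1 = n + 1 := by omega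
  have hn2 : n + 2 - 2 = n := by omega
  rw [hn1, hn2]
  have hcast : ((n + 2 : ℕ) : ℝ) - 1 = (n : ℝ) + 1 := by push_cast; ring
  rw [hcast]
  have hπ : (0:ℝ) < π := pi_pos
  have hnn : (0:ℝ) < (n:ℝ) + 1 := by positivity
  by_cases hcase : p ≤ π / 2
  · have h := aux_sin_pow n p hp0 hcase
    refine le_trans ?_ h
    rw [div_pow, div_mul_eq_mul_div, div_div,
      div_le_div_iff₀ (by positivity) (by positivity)]
    have h2 : (1:ℝ) ≤ 2 ^ n := one_le_pow₀ one_le_two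
    have hX : (0:ℝ) ≤ p ^ (n+1) * (π ^ n * ((n:ℝ)+1)) := by positivity
    nlinarith [mul_le_mul_of_nonneg_right h2 hX]
  · push_neg at hcase
    have h := aux_sin_pow n (π / 2) (by positivity) le_rfl
    have hsplit : ∫ θ in (0:ℝ)..(π/2), (Real.sin θ) ^ n ≤ ∫ θ in (0:ℝ)..p, (Real.sin θ) ^ n := by
      apply intervalIntegral.integral_mono_interval le_rfl (by positivity) (le_of_lt hcase)
      · filter_upwards [MeasureTheory.ae_restrict_mem measurableSet_Ioc] with θ hθ
        have h1 : 0 ≤ θ := le_of_lt hθ.1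
        have h2 : θ ≤ π := le_trans hθ.2 hpπ
        exact pow_nonneg (Real.sin_nonneg_of_nonneg_of_le_pi h1 h2) n
      · exact (Continuous.intervalIntegrable (by continuity) _ _)
    refine le_trans ?_ (le_trans h hsplit)
    have hval : (2 / π) ^ n * (π / 2) ^ (n + 1) / ((n:ℝ) + 1) = π / (2 * ((n:ℝ) + 1)) := by
      rw [pow_succ, div_pow, div_pow]
      field_simp
    rw [hval]
    rw [div_le_div_iff₀ (by positivity) (by positivity)]
    have hppow : p ^ (n + 1) ≤ π ^ (n + 1) := pow_le_pow_left₀ hp0 hpπ _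
    calc p ^ (n + 1) * (2 * ((n:ℝ) + 1))
        ≤ π ^ (n + 1) * (2 * ((n:ℝ) + 1)) := by
          apply mul_le_mul_of_nonneg_right hppow; positivity
      _ = π * (2 * π ^ n * ((n:ℝ) + 1)) := by ring
end

section
/- Let d ≥ 2 be an integer and ρ > 0. Let σ denote the uniform probability measure on the unit sphere S^{d−1} ⊂ ℝ^d (the restriction of the (d−1)-dimensional Hausdorff measure H^{d−1} to S^{d−1}, normalized to total mass 1), and let ν denote the uniform probability measure on the closed ball B̄(0,ρ) ⊂ ℝ^d (Lebesgue measure restricted to B̄(0,ρ), normalized by κ_d ρ^d). Then the pushforward of the product measure σ ⊗ ν under the addition map (x,e) ↦ x + e is absolutely continuous with respect to Lebesgue measure on ℝ^d, with density x ↦ H^{d−1}( B̄(x,ρ) ∩ S^{d−1} ) / (d · κ_d² · ρ^d); that is, for every Borel set A ⊆ ℝ^d, (σ ⊗ ν)({(x,e) : x + e ∈ A}) = (1/(d · κ_d² · ρ^d)) · ∫_A H^{d−1}( B̄(x,ρ) ∩ S^{d−1} ) dx. -/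
open MeasureTheory Real Filter
open Metric
open scoped ENNReal NNReal

private lemma insertNth_sub' {n : ℕ} (k : Fin (n+1)) (s t : ℝ) (u v : Fin n → ℝ) :
    (Fin.insertNth k s u : Fin (n+1) → ℝ) - (Fin.insertNth k t v : Fin (n+1) → ℝ)
      = (Fin.insertNth k (s - t) (u - v) : Fin (n+1) → ℝ) := by
  funext i
  refine Fin.succAboveCases k ?_ ?_ i
  · simp
  · intro j; simp

private lemma norm_V_eq {n : ℕ} (f : Fin n → ℝ) :
    ‖(EuclideanSpace.equiv (Fin n) ℝ).symm f‖ = Real.sqrt (∑ i, (f i) ^ 2) := by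
  rw [EuclideanSpace.norm_eq]
  congr 1
  refine Finset.sum_congr rfl fun i _ => ?_
  rw [Real.norm_eq_abs, sq_abs]
  rfl

private lemma norm_insertNth_le {n : ℕ} (k : Fin (n+1)) (c : ℝ) (u : Fin n → ℝ) :
    ‖(EuclideanSpace.equiv (Fin (n+1)) ℝ).symm (Fin.insertNth k c u)‖
      ≤ |c| + ‖(EuclideanSpace.equiv (Fin n) ℝ).symm u‖ := by
  rw [norm_V_eq, norm_V_eq]
  have hsum : ∑ i : Fin (n+1), (Fin.insertNth k c u i) ^ 2
      = c ^ 2 + ∑ j : Fin n, (u j) ^ 2 := by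
    rw [Fin.sum_univ_succAbove _ k]
    simp
  rw [hsum]
  have h1 : (0:ℝ) ≤ ∑ j : Fin n, (u j) ^ 2 := Finset.sum_nonneg fun j _ => sq_nonneg _
  calc Real.sqrt (c ^ 2 + ∑ j : Fin n, (u j) ^ 2)
      ≤ Real.sqrt ((|c| + Real.sqrt (∑ j : Fin n, (u j) ^ 2)) ^ 2) := by
        apply Real.sqrt_le_sqrt
        nlinarith [abs_nonneg c, sq_abs c, Real.sq_sqrt h1, Real.sqrt_nonneg (∑ j : Fin n, (u j) ^ 2)]
    _ = |c| + Real.sqrt (∑ j : Fin n, (u j) ^ 2) := Real.sqrt_sq (by positivity)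

private lemma sqrt_diff_le {c u v D : ℝ} (hc : 0 < c) (hu : c ≤ u) (hv : c ≤ v)
    (hD : 0 ≤ D) (huv : u - v ≤ D) : Real.sqrt u - Real.sqrt v ≤ D / Real.sqrt c := by
  have hscpos : 0 < Real.sqrt c := Real.sqrt_pos.2 hc
  rw [le_div_iff₀ hscpos]
  rcases le_or_gt (Real.sqrt u) (Real.sqrt v) with h | h
  · nlinarith
  · have h1 : Real.sqrt c ≤ Real.sqrt u := Real.sqrt_le_sqrt hu
    have h2 : Real.sqrt c ≤ Real.sqrt v := Real.sqrt_le_sqrt hv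
    nlinarith [Real.sq_sqrt (show (0:ℝ) ≤ u by linarith),
      Real.sq_sqrt (show (0:ℝ) ≤ v by linarith)]

private lemma hausdorff_closedBall_lt_top (n : ℕ) (r : ℝ) :
    μH[(n : ℝ)] (Metric.closedBall (0 : EuclideanSpace ℝ (Fin n)) r) < ⊤ := by
  have h1 : ((n : ℕ) : ℝ) = ((Module.finrank ℝ (EuclideanSpace ℝ (Fin n)) : ℕ) : ℝ) := by
    rw [finrank_euclideanSpace_fin]
  rw [h1]
  exact (isCompact_closedBall _ _).measure_lt_top

set_option maxHeartbeats 1000000 in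
private lemma sphere_hausdorff_lt_top (n : ℕ) :
    μH[(n : ℝ)] (Metric.sphere (0 : EuclideanSpace ℝ (Fin (n+1))) 1) < ⊤ := by
  classical
  set E' := EuclideanSpace ℝ (Fin n) with hE'
  set c : ℝ := 1 / (n + 1) with hc_def
  have hc : 0 < c := by positivity
  have hc1 : c ≤ 1 := by
    rw [hc_def, div_le_one (by positivity)]
    linarith [Nat.cast_nonneg (α := ℝ) n]
  set r : ℝ := Real.sqrt (1 - c) with hr_def
  have hr2 : r ^ 2 = 1 - c := Real.sq_sqrt (by linarith)
  have hr0 : 0 ≤ r := Real.sqrt_nonneg _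
  have hr1 : r ≤ 1 := by nlinarith
  have hscpos : 0 < Real.sqrt c := Real.sqrt_pos.2 hc
  set V : (Fin (n+1) → ℝ) → EuclideanSpace ℝ (Fin (n+1)) :=
    fun f => (EuclideanSpace.equiv (Fin (n+1)) ℝ).symm f with hV
  set g : Fin (n+1) → Bool → E' → EuclideanSpace ℝ (Fin (n+1)) := fun k b y =>
    V (Fin.insertNth k ((if b then (1:ℝ) else -1) * Real.sqrt (1 - ‖y‖ ^ 2)) y) with hg_def
  set K : NNReal := ⟨1 + 2 / Real.sqrt c, by positivity⟩ with hK_def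
  have hlip : ∀ k b, LipschitzOnWith K (g k b) (Metric.closedBall (0 : E') r) := by
    intro k b
    rw [lipschitzOnWith_iff_dist_le_mul]
    intro y hy y' hy'
    rw [mem_closedBall_zero_iff] at hy hy'
    have hny : 0 ≤ ‖y‖ := norm_nonneg y
    have hny' : 0 ≤ ‖y'‖ := norm_nonneg y'
    have hy2 : c ≤ 1 - ‖y‖ ^ 2 := by nlinarith
    have hy2' : c ≤ 1 - ‖y'‖ ^ 2 := by nlinarith
    have hnn : |(‖y‖ : ℝ) - ‖y'‖| ≤ ‖y - y'‖ := abs_norm_sub_norm_le y y'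
    have habs : |(1 - ‖y‖ ^ 2) - (1 - ‖y'‖ ^ 2)| ≤ 2 * ‖y - y'‖ := by
      rw [abs_le] at hnn ⊢
      constructor <;> nlinarith
    have key : ∀ u v : ℝ, c ≤ u → c ≤ v → u - v ≤ 2 * ‖y - y'‖ →
        Real.sqrt u - Real.sqrt v ≤ 2 * ‖y - y'‖ / Real.sqrt c := fun u v hu hv huv =>
      sqrt_diff_le hc hu hv (by positivity) huv
    have hdiff : |Real.sqrt (1 - ‖y‖ ^ 2) - Real.sqrt (1 - ‖y'‖ ^ 2)|
        ≤ 2 * ‖y - y'‖ / Real.sqrt c := by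
      rw [abs_le] at habs ⊢
      constructor
      · have := key _ _ hy2' hy2 (by linarith)
        linarith
      · exact key _ _ hy2 hy2' (by linarith)
    have hgsub : g k b y - g k b y'
        = V (Fin.insertNth k
            ((if b then (1:ℝ) else -1) * Real.sqrt (1 - ‖y‖ ^ 2)
              - (if b then (1:ℝ) else -1) * Real.sqrt (1 - ‖y'‖ ^ 2))
            ((fun j => y j) - (fun j => y' j))) := by
      simp only [hg_def, hV]
      rw [← map_sub]
      congr 1
      exact insertNth_sub' k _ _ _ _
    rw [dist_eq_norm, dist_eq_norm, hgsub]
    have hb : |(if b then (1:ℝ) else -1)| = 1 := by cases b <;> simp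
    calc ‖V (Fin.insertNth k _ ((fun j => y j) - (fun j => y' j)))‖
        ≤ |(if b then (1:ℝ) else -1) * Real.sqrt (1 - ‖y‖ ^ 2)
            - (if b then (1:ℝ) else -1) * Real.sqrt (1 - ‖y'‖ ^ 2)|
          + ‖(EuclideanSpace.equiv (Fin n) ℝ).symm ((fun j => y j) - (fun j => y' j))‖ :=
          norm_insertNth_le k _ _
      _ ≤ 2 * ‖y - y'‖ / Real.sqrt c + ‖y - y'‖ := by
          have he : ((EuclideanSpace.equiv (Fin n) ℝ).symm ((fun j => y j) - (fun j => y' j)))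
              = y - y' := rfl
          rw [he, ← mul_sub, abs_mul, hb, one_mul]
          gcongr
      _ = (1 + 2 / Real.sqrt c) * ‖y - y'‖ := by ring
      _ = (K : ℝ) * ‖y - y'‖ := rfl
  -- coverage
  have cover : Metric.sphere (0 : EuclideanSpace ℝ (Fin (n+1))) 1
      ⊆ ⋃ k, ⋃ b, g k b '' Metric.closedBall (0 : E') r := by
    intro x hx
    rw [mem_sphere_zero_iff_norm] at hx
    have hsum : ∑ i, (x i) ^ 2 = 1 := by
      rw [EuclideanSpace.norm_eq] at hx
      have := Real.sqrt_eq_one.mp (by simpa using hx)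
      simpa [Real.norm_eq_abs, sq_abs] using this
    obtain ⟨k, hk⟩ : ∃ k, c ≤ (x k) ^ 2 := by
      by_contra h
      push_neg at h
      have hlt : ∑ i, (x i) ^ 2 < ∑ _i : Fin (n+1), c :=
        Finset.sum_lt_sum_of_nonempty Finset.univ_nonempty fun i _ => h i
      rw [Finset.sum_const, Finset.card_univ, Fintype.card_fin, nsmul_eq_mul, hc_def,
        hsum] at hlt
      push_cast at hlt
      rw [mul_one_div, div_self (by positivity : ((n:ℝ) + 1) ≠ 0)] at hlt
      exact lt_irrefl _ hlt
    set y : E' := (EuclideanSpace.equiv (Fin n) ℝ).symm (Fin.removeNth k x) with hy_def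
    have hyn : ‖y‖ ^ 2 = 1 - (x k) ^ 2 := by
      rw [hy_def, norm_V_eq, Real.sq_sqrt (Finset.sum_nonneg fun j _ => sq_nonneg _)]
      rw [Fin.sum_univ_succAbove _ k] at hsum
      simp only [Fin.removeNth]
      linarith
    have hyr : y ∈ Metric.closedBall (0 : E') r := by
      rw [mem_closedBall_zero_iff]
      have h1 : ‖y‖ ^ 2 ≤ r ^ 2 := by rw [hyn, hr2]; linarith
      nlinarith [norm_nonneg y, hr0]
    have hsq : Real.sqrt (1 - ‖y‖ ^ 2) = |x k| := by
      rw [hyn, show 1 - (1 - (x k) ^ 2) = (x k) ^ 2 by ring, Real.sqrt_sq_eq_abs]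
    by_cases h0 : 0 ≤ x k
    · refine Set.mem_iUnion.2 ⟨k, Set.mem_iUnion.2 ⟨true, y, hyr, ?_⟩⟩
      have hxk : (if (true : Bool) then (1:ℝ) else -1) * Real.sqrt (1 - ‖y‖ ^ 2) = x k := by
        rw [hsq]; simp [abs_of_nonneg h0]
      show V (Fin.insertNth k _ y) = x
      rw [hxk]
      exact congrArg (WithLp.toLp 2) (Fin.insertNth_self_removeNth k x.ofLp)
    · refine Set.mem_iUnion.2 ⟨k, Set.mem_iUnion.2 ⟨false, y, hyr, ?_⟩⟩
      have hxk : (if (false : Bool) then (1:ℝ) else -1) * Real.sqrt (1 - ‖y‖ ^ 2) = x k := by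
        rw [if_neg (by simp), hsq, abs_of_neg (lt_of_not_ge h0)]; ring
      show V (Fin.insertNth k _ y) = x
      rw [hxk]
      exact congrArg (WithLp.toLp 2) (Fin.insertNth_self_removeNth k x.ofLp)
  -- measure bound
  have hBfin : μH[(n : ℝ)] (Metric.closedBall (0 : E') r) < ⊤ :=
    hausdorff_closedBall_lt_top n r
  have hfin : ∀ k b, μH[(n : ℝ)] (g k b '' Metric.closedBall (0 : E') r) < ⊤ := by
    intro k b
    refine lt_of_le_of_lt ((hlip k b).hausdorffMeasure_image_le (Nat.cast_nonneg n)) ?_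
    exact ENNReal.mul_lt_top
      (ENNReal.rpow_lt_top_of_nonneg (Nat.cast_nonneg n) ENNReal.coe_ne_top) hBfin
  calc μH[(n : ℝ)] (Metric.sphere (0 : EuclideanSpace ℝ (Fin (n+1))) 1)
      ≤ μH[(n : ℝ)] (⋃ k, ⋃ b, g k b '' Metric.closedBall (0 : E') r) := measure_mono cover
    _ ≤ ∑' k, μH[(n : ℝ)] (⋃ b, g k b '' Metric.closedBall (0 : E') r) := measure_iUnion_le _
    _ ≤ ∑' k, ∑' b, μH[(n : ℝ)] (g k b '' Metric.closedBall (0 : E') r) :=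
        ENNReal.tsum_le_tsum fun k => measure_iUnion_le _
    _ < ⊤ := by
        rw [tsum_fintype]
        refine ENNReal.sum_lt_top.mpr fun k _ => ?_
        rw [tsum_fintype]
        exact ENNReal.sum_lt_top.mpr fun b _ => hfin k b

/-- the distribution of `X + e`, where `X` is uniform on the unit sphere and `e` is
an independent uniform point of the ball `B̄(0,ρ)`, has density
`x ↦ H^{d-1}(B̄(x,ρ) ∩ S^{d-1}) / (d κ_d² ρ^d)` with respect to Lebesgue measure. -/
theorem perturbed_point_density (d : ℕ) (hd : 2 ≤ d) (ρ : ℝ) (hρ : 0 < ρ)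
    (A : Set (EuclideanSpace ℝ (Fin d))) (hA : MeasurableSet A) :
    (((ENNReal.ofReal ((d : ℝ) * kappa d))⁻¹ •
          (μH[(d : ℝ) - 1] :
              Measure (EuclideanSpace ℝ (Fin d))).restrict
            (Metric.sphere (0 : EuclideanSpace ℝ (Fin d)) 1)).prod
        ((ENNReal.ofReal (kappa d * ρ ^ d))⁻¹ •
          volume.restrict (Metric.closedBall (0 : EuclideanSpace ℝ (Fin d)) ρ)))
        {p : EuclideanSpace ℝ (Fin d) × EuclideanSpace ℝ (Fin d) | p.1 + p.2 ∈ A} =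
      (∫⁻ x in A,
          μH[(d : ℝ) - 1]
            (Metric.closedBall x ρ ∩ Metric.sphere (0 : EuclideanSpace ℝ (Fin d)) 1)) /
        ENNReal.ofReal ((d : ℝ) * kappa d ^ 2 * ρ ^ d) := by
  classical
  obtain ⟨n, rfl⟩ : ∃ n, d = n + 1 := ⟨d - 1, by omega⟩
  have hexp : ((n + 1 : ℕ) : ℝ) - 1 = (n : ℝ) := by push_cast; ring
  rw [hexp]
  -- positivity of constants
  have hκ : 0 < kappa (n + 1) := by
    rw [kappa]
    exact ENNReal.toReal_pos (measure_ball_pos volume _ one_pos).ne' measure_ball_lt_top.ne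
  have hd1 : (0:ℝ) < ((n + 1 : ℕ) : ℝ) := by positivity
  have hρd : (0:ℝ) < ρ ^ (n + 1) := by positivity
  -- abbreviations
  set μ : Measure (EuclideanSpace ℝ (Fin (n + 1))) := μH[(n : ℝ)].restrict (Metric.sphere (0 : (EuclideanSpace ℝ (Fin (n + 1)))) 1) with hμ
  set ν : Measure (EuclideanSpace ℝ (Fin (n + 1))) := volume.restrict (Metric.closedBall (0 : (EuclideanSpace ℝ (Fin (n + 1)))) ρ) with hν
  haveI : IsFiniteMeasure μ := by
    constructor
    rw [hμ, Measure.restrict_apply_univ]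
    exact sphere_hausdorff_lt_top n
  set c₁ : ℝ≥0∞ := (ENNReal.ofReal (((n + 1 : ℕ) : ℝ) * kappa (n + 1)))⁻¹ with hc₁
  set c₂ : ℝ≥0∞ := (ENNReal.ofReal (kappa (n + 1) * ρ ^ (n + 1)))⁻¹ with hc₂
  have hS : MeasurableSet {p : (EuclideanSpace ℝ (Fin (n + 1))) × (EuclideanSpace ℝ (Fin (n + 1))) | p.1 + p.2 ∈ A} :=
    (measurable_fst.add measurable_snd) hA
  set W : Set ((EuclideanSpace ℝ (Fin (n + 1))) × (EuclideanSpace ℝ (Fin (n + 1)))) := {p : (EuclideanSpace ℝ (Fin (n + 1))) × (EuclideanSpace ℝ (Fin (n + 1))) | p.2 ∈ A ∧ dist p.2 p.1 ≤ ρ} with hW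
  have hWmeas : MeasurableSet W := by
    refine (measurable_snd hA).inter ?_
    exact (isClosed_le (continuous_snd.dist continuous_fst) continuous_const).measurableSet
  -- Step 1: product measure as iterated integral
  rw [Measure.prod_apply hS]
  rw [lintegral_smul_measure]
  have hsec : ∀ x : (EuclideanSpace ℝ (Fin (n + 1))), (c₂ • ν) (Prod.mk x ⁻¹' {p : (EuclideanSpace ℝ (Fin (n + 1))) × (EuclideanSpace ℝ (Fin (n + 1))) | p.1 + p.2 ∈ A})
      = c₂ * ∫⁻ y, W.indicator 1 (x, y) ∂volume := by
    intro x
    rw [Measure.smul_apply, smul_eq_mul]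
    congr 1
    have hpre : Prod.mk x ⁻¹' {p : (EuclideanSpace ℝ (Fin (n + 1))) × (EuclideanSpace ℝ (Fin (n + 1))) | p.1 + p.2 ∈ A} = (fun e => x + e) ⁻¹' A := rfl
    rw [hpre, hν, Measure.restrict_apply (hA.preimage (measurable_const_add x))]
    have hset : (fun e => x + e) ⁻¹' A ∩ Metric.closedBall (0 : (EuclideanSpace ℝ (Fin (n + 1)))) ρ
        = (fun e => x + e) ⁻¹' (A ∩ Metric.closedBall x ρ) := by
      ext e
      simp only [Set.mem_inter_iff, Set.mem_preimage, Metric.mem_closedBall, dist_eq_norm,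
        sub_zero, add_sub_cancel_left]
    rw [hset, measure_preimage_add volume x _]
    rw [← lintegral_indicator_one (hA.inter measurableSet_closedBall)]
    refine lintegral_congr fun y => ?_
    by_cases hy : y ∈ A ∩ Metric.closedBall x ρ
    · have hyW : (x, y) ∈ W := by
        obtain ⟨h1, h2⟩ := hy
        exact ⟨h1, by rwa [Metric.mem_closedBall] at h2⟩
      rw [Set.indicator_of_mem hy, Set.indicator_of_mem hyW]
      rfl
    · have hyW : (x, y) ∉ W := by
        intro hmem
        exact hy ⟨hmem.1, Metric.mem_closedBall.mpr hmem.2⟩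
      rw [Set.indicator_of_notMem hy, Set.indicator_of_notMem hyW]
  rw [lintegral_congr hsec]
  have hc₂ne : c₂ ≠ ⊤ := by
    rw [hc₂]
    exact ENNReal.inv_ne_top.2 (ENNReal.ofReal_pos.2 (by positivity)).ne'
  rw [lintegral_const_mul' c₂ _ hc₂ne]
  -- Step 2: swap the order of integration
  have hmeasW : AEMeasurable (Function.uncurry fun x y => W.indicator (1 : (EuclideanSpace ℝ (Fin (n + 1))) × (EuclideanSpace ℝ (Fin (n + 1))) → ℝ≥0∞) (x, y))
      (μ.prod volume) := ((measurable_one.indicator hWmeas).aemeasurable)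
  have hswap : ∫⁻ x, (∫⁻ y, W.indicator 1 (x, y) ∂volume) ∂μ
      = ∫⁻ y, (∫⁻ x, W.indicator 1 (x, y) ∂μ) ∂volume :=
    lintegral_lintegral_swap hmeasW
  rw [hswap]
  -- Step 3: compute the inner integral
  have hinner : ∀ y : (EuclideanSpace ℝ (Fin (n + 1))), (∫⁻ x, W.indicator 1 (x, y) ∂μ)
      = A.indicator
          (fun x => μH[(n : ℝ)] (Metric.closedBall x ρ ∩ Metric.sphere (0 : (EuclideanSpace ℝ (Fin (n + 1)))) 1)) y := by
    intro y
    by_cases hy : y ∈ A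
    · have hxind : ∀ x : (EuclideanSpace ℝ (Fin (n + 1))), W.indicator (1 : (EuclideanSpace ℝ (Fin (n + 1))) × (EuclideanSpace ℝ (Fin (n + 1))) → ℝ≥0∞) (x, y)
          = (Metric.closedBall y ρ).indicator (1 : (EuclideanSpace ℝ (Fin (n + 1))) → ℝ≥0∞) x := by
        intro x
        by_cases hx : x ∈ Metric.closedBall y ρ
        · have hxW : (x, y) ∈ W :=
            ⟨hy, by rw [dist_comm]; exact Metric.mem_closedBall.mp hx⟩
          rw [Set.indicator_of_mem hx, Set.indicator_of_mem hxW]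
          rfl
        · have hxW : (x, y) ∉ W := fun hmem =>
            hx (Metric.mem_closedBall.mpr (by rw [dist_comm]; exact hmem.2))
          rw [Set.indicator_of_notMem hx, Set.indicator_of_notMem hxW]
      rw [lintegral_congr hxind, lintegral_indicator_one measurableSet_closedBall,
        Set.indicator_of_mem hy, hμ, Measure.restrict_apply measurableSet_closedBall]
    · rw [Set.indicator_of_notMem hy]
      have hz : ∀ x : (EuclideanSpace ℝ (Fin (n + 1))), W.indicator (1 : (EuclideanSpace ℝ (Fin (n + 1))) × (EuclideanSpace ℝ (Fin (n + 1))) → ℝ≥0∞) (x, y) = 0 := by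
        intro x
        exact Set.indicator_of_notMem (fun hmem => hy hmem.1) _
      rw [lintegral_congr hz, lintegral_zero]
  rw [lintegral_congr hinner, lintegral_indicator hA]
  -- Step 4: identify the constants
  have hone : c₁ * c₂
      = (ENNReal.ofReal (((n + 1 : ℕ) : ℝ) * kappa (n + 1) ^ 2 * ρ ^ (n + 1)))⁻¹ := by
    rw [hc₁, hc₂, ← ENNReal.mul_inv (Or.inr ENNReal.ofReal_ne_top)
      (Or.inl ENNReal.ofReal_ne_top), ← ENNReal.ofReal_mul (by positivity)]
    congr 2
    ring
  rw [smul_eq_mul, ← mul_assoc, hone, ENNReal.div_eq_inv_mul]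
end

section
/- Let d ≥ 2 be an integer and let α ∈ (−2/(d−1), 0). Set β = (2 − α(d+1))/(4d) and C₀ = (2^{(d−1)/2} κ_{d−1} / (d κ_d²))^{1/(2d)}, and for λ > 0 set u_λ = C₀ λ^β. Then for every fixed h ≥ 0, lim_{λ → ∞} φ_{λ,α,u_λ}(h) = h^{(d−1)/2}. -/
open MeasureTheory Real Filter

/-- The function `g_{λ,α,u}(h)`. -/
noncomputable def gfun (lam al u h : ℝ) : ℝ :=
  min (max ((lam ^ al / u ^ 2 * h - (1 / 2) * (1 + lam ^ al) / u ^ 4 * h ^ 2) /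
      (1 - h / u ^ 2)) 0) 2

/-- The density `φ_{λ,α,u}(h)`. -/
noncomputable def phi (d : ℕ) (lam al u h : ℝ) : ℝ :=
  lam * (1 + lam ^ al) ^ d / u ^ (d + 1) / (kappa d * lam ^ ((d : ℝ) * al)) *
    s1 d (gfun lam al u h) * (1 - h / u ^ 2) ^ (d - 1)

lemma sqrt_pow_nat (x : ℝ) (hx : 0 ≤ x) (n : ℕ) : Real.sqrt x ^ n = x ^ ((n : ℝ)/2) := by
  rw [Real.sqrt_eq_rpow, ← Real.rpow_natCast (x ^ ((1:ℝ)/2)) n, ← Real.rpow_mul hx]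
  ring_nf

lemma ratio_lim (d : ℕ) (hd : 2 ≤ d) :
    Tendsto (fun g : ℝ => (∫ θ in (0:ℝ)..(Real.arccos (1-g)), (Real.sin θ) ^ (d-2)) /
        g ^ (((d:ℝ)-1)/2)) (nhdsWithin 0 (Set.Ioi 0))
      (nhds ((2:ℝ) ^ (((d:ℝ)-1)/2) / ((d:ℝ)-1))) := by
  have hdm1 : (0:ℝ) < (d:ℝ) - 1 := by
    have : (2:ℝ) ≤ d := by exact_mod_cast hd
    linarith
  have hmem : Set.Ioo (0:ℝ) 1 ∈ nhdsWithin (0:ℝ) (Set.Ioi 0) :=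
    Ioo_mem_nhdsGT_of_mem ⟨le_refl 0, one_pos⟩
  have hcont : Continuous fun θ : ℝ => (Real.sin θ) ^ (d-2) := continuous_sin.pow _
  set p : ℝ := ((d:ℝ)-1)/2 with hp
  have hppos : 0 < p := by positivity
  apply HasDerivAt.lhopital_zero_nhdsGT
    (f' := fun g : ℝ => Real.sin (Real.arccos (1-g)) ^ (d-2) * (1 / Real.sqrt (1 - (1-g)^2)))
    (g' := fun g : ℝ => p * g ^ (p - 1))
  · filter_upwards [hmem] with g hg
    have h1 : (1:ℝ) - g ≠ -1 := by nlinarith [hg.1, hg.2]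
    have h2 : (1:ℝ) - g ≠ 1 := by nlinarith [hg.1, hg.2]
    have harc : HasDerivAt (fun g : ℝ => Real.arccos (1-g)) (1 / Real.sqrt (1 - (1-g)^2)) g := by
      have := (Real.hasDerivAt_arccos h1 h2).comp g ((hasDerivAt_id g).const_sub 1)
      rw [show (1 / Real.sqrt (1 - (1-g)^2)) = -(1 / Real.sqrt (1 - (1-g)^2)) * -1 by ring]
      exact this
    have hint : HasDerivAt (fun y : ℝ => ∫ θ in (0:ℝ)..y, (Real.sin θ) ^ (d-2))
        (Real.sin (Real.arccos (1-g)) ^ (d-2)) (Real.arccos (1-g)) :=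
      intervalIntegral.integral_hasDerivAt_right (hcont.intervalIntegrable _ _)
        hcont.stronglyMeasurable.stronglyMeasurableAtFilter hcont.continuousAt
    exact hint.comp g harc
  · filter_upwards [hmem] with g hg
    exact Real.hasDerivAt_rpow_const (Or.inl (ne_of_gt hg.1))
  · filter_upwards [hmem] with g hg
    have : (0:ℝ) < g ^ (p-1) := Real.rpow_pos_of_pos hg.1 _
    positivity
  · have hc : Continuous (fun g : ℝ => ∫ θ in (0:ℝ)..(Real.arccos (1-g)), (Real.sin θ) ^ (d-2)) :=
      (intervalIntegral.continuous_primitive (fun a b => hcont.intervalIntegrable a b) 0).comp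
        (Real.continuous_arccos.comp (continuous_const.sub continuous_id))
    have := hc.continuousAt.tendsto.mono_left (nhdsWithin_le_nhds (s := Set.Ioi (0:ℝ)) (a := (0:ℝ)))
    simpa using this
  · have hc : ContinuousAt (fun g : ℝ => g ^ p) 0 :=
      Real.continuousAt_rpow_const 0 p (Or.inr hppos.le)
    have := hc.tendsto.mono_left (nhdsWithin_le_nhds (s := Set.Ioi (0:ℝ)) (a := (0:ℝ)))
    simpa [Real.zero_rpow (ne_of_gt hppos)] using this
  · have heq : ∀ g ∈ Set.Ioo (0:ℝ) 1,
        (2 - g) ^ (((d:ℝ)-3)/2) * (2/((d:ℝ)-1)) =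
        Real.sin (Real.arccos (1-g)) ^ (d-2) * (1 / Real.sqrt (1 - (1-g)^2)) / (p * g ^ (p - 1)) := by
      intro g hg
      have hg0 : (0:ℝ) < g := hg.1
      have hq0 : (0:ℝ) < 2 - g := by linarith [hg.2]
      have e1 : 1 - (1-g)^2 = g * (2-g) := by ring
      rw [Real.sin_arccos, e1, Real.sqrt_mul hg0.le, mul_pow,
        sqrt_pow_nat g hg0.le, sqrt_pow_nat (2-g) hq0.le,
        show Real.sqrt g = g ^ ((1:ℝ)/2) from Real.sqrt_eq_rpow g,
        show Real.sqrt (2-g) = (2-g) ^ ((1:ℝ)/2) from Real.sqrt_eq_rpow _]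
      have hcast : ((d - 2 : ℕ) : ℝ) = (d:ℝ) - 2 := by
        push_cast [hd]; ring
      rw [hcast]
      have A : g ^ (((d:ℝ) - 2) / 2) = g ^ (p - 1) * g ^ ((1:ℝ)/2) := by
        rw [← Real.rpow_add hg0]; congr 1; rw [hp]; ring
      have B : (2-g) ^ (((d:ℝ) - 2) / 2) = (2-g) ^ (((d:ℝ)-3)/2) * (2-g) ^ ((1:ℝ)/2) := by
        rw [← Real.rpow_add hq0]; congr 1; ring
      rw [A, B]
      have hne1 : g ^ ((1:ℝ)/2) ≠ 0 := ne_of_gt (Real.rpow_pos_of_pos hg0 _)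
      have hne2 : (2-g) ^ ((1:ℝ)/2) ≠ 0 := ne_of_gt (Real.rpow_pos_of_pos hq0 _)
      have hne3 : g ^ (p-1) ≠ 0 := ne_of_gt (Real.rpow_pos_of_pos hg0 _)
      have hne4 : p ≠ 0 := ne_of_gt hppos
      have hne5 : (d:ℝ) - 1 ≠ 0 := ne_of_gt hdm1
      field_simp
      rw [hp]; ring
    have hc : ContinuousAt (fun g : ℝ => (2 - g) ^ (((d:ℝ)-3)/2) * (2/((d:ℝ)-1))) 0 :=
      (((continuous_const.sub continuous_id).continuousAt).rpow_const
        (Or.inl (by norm_num))).mul continuousAt_const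
    have hval : (2 - (0:ℝ)) ^ (((d:ℝ)-3)/2) * (2/((d:ℝ)-1)) = (2:ℝ) ^ (((d:ℝ)-1)/2) / ((d:ℝ)-1) := by
      have : (2:ℝ) ^ (((d:ℝ)-1)/2) = (2:ℝ) ^ (((d:ℝ)-3)/2) * 2 := by
        rw [show ((d:ℝ)-1)/2 = ((d:ℝ)-3)/2 + 1 by ring, Real.rpow_add two_pos, Real.rpow_one]
      rw [this]; ring
    have := (hc.tendsto.mono_left (nhdsWithin_le_nhds (s := Set.Ioi (0:ℝ)) (a := (0:ℝ)))).congr'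
      (by filter_upwards [hmem] with g hg; exact heq g hg)
    rwa [hval] at this

lemma gfun_nonneg (lam al u h : ℝ) : 0 ≤ gfun lam al u h :=
  le_min (le_max_right _ _) (by norm_num)

lemma gfun_facts (al h lam uu : ℝ) (hh : 0 < h) (hlam : 0 < lam) (huu : 0 < uu)
    (h1 : h / uu ^ 2 < 1/2)
    (h2 : (1 + lam ^ al) * h / (lam ^ al * uu ^ 2) < 1)
    (h3 : 2 * (lam ^ al / uu ^ 2 * h) < 1) :
    gfun lam al uu h =
      (lam ^ al / uu ^ 2 * h - (1 / 2) * (1 + lam ^ al) / uu ^ 4 * h ^ 2) / (1 - h / uu ^ 2) ∧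
    0 < gfun lam al uu h ∧ gfun lam al uu h < 1 ∧
    gfun lam al uu h ≤ 2 * (lam ^ al / uu ^ 2 * h) := by
  have ha : 0 < lam ^ al := Real.rpow_pos_of_pos hlam al
  set a := lam ^ al with haeq
  set t := a / uu ^ 2 * h with ht
  set B := (1 + a) * h / (a * uu ^ 2) with hB
  set N := a / uu ^ 2 * h - (1 / 2) * (1 + a) / uu ^ 4 * h ^ 2 with hN
  set D := 1 - h / uu ^ 2 with hD
  have huu2 : (0:ℝ) < uu ^ 2 := by positivity
  have htpos : 0 < t := by positivity
  have hBnn : 0 ≤ B := by positivity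
  clear_value a t B N D
  have hNt : N = t * (1 - (1/2) * B) := by
    rw [hN, ht, hB]; field_simp
  have hNpos : 0 < N := by
    rw [hNt]; apply mul_pos htpos; linarith
  have hNlet : N ≤ t := by
    rw [hNt]; nlinarith
  have hDpos : (1:ℝ)/2 < D := by rw [hD]; linarith
  have ht12 : t < 1/2 := by linarith
  have hND1 : N / D < 1 := by
    rw [div_lt_one (by linarith)]; linarith
  have hNDpos : 0 < N / D := div_pos hNpos (by linarith)
  have hND2t : N / D ≤ 2 * t := by
    rw [div_le_iff₀ (by linarith)]; nlinarith
  have hgeq : gfun lam al uu h = N / D := by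
    unfold gfun
    rw [← haeq, ← hN, ← hD, max_eq_left hNDpos.le, min_eq_left (by linarith)]
  refine ⟨hgeq, ?_, ?_, ?_⟩ <;> rw [hgeq]
  · exact hNDpos
  · exact hND1
  · exact hND2t

lemma phi_eq (d : ℕ) (hd : 2 ≤ d) (al h lam uu : ℝ) (hh : 0 < h) (hlam : 0 < lam)
    (huu : 0 < uu)
    (h1 : h / uu ^ 2 < 1/2)
    (h2 : (1 + lam ^ al) * h / (lam ^ al * uu ^ 2) < 1)
    (h3 : 2 * (lam ^ al / uu ^ 2 * h) < 1)
    (hu2d : uu ^ (2*d) =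
      ((2:ℝ) ^ (((d:ℝ)-1)/2) * kappa (d - 1) / ((d:ℝ) * kappa d ^ 2)) *
        lam ^ (1 - al * ((d:ℝ)+1)/2)) :
    phi d lam al uu h =
      ((∫ θ in (0:ℝ)..(Real.arccos (1 - gfun lam al uu h)), (Real.sin θ) ^ (d-2)) /
          (gfun lam al uu h) ^ (((d:ℝ)-1)/2)) *
      ((1 + lam ^ al) ^ d * (1 - h / uu ^ 2) ^ (d-1) *
        ((1 - (1/2) * ((1 + lam ^ al) * h / (lam ^ al * uu ^ 2))) / (1 - h / uu ^ 2)) ^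
          (((d:ℝ)-1)/2) *
        (h ^ (((d:ℝ)-1)/2) * (((d:ℝ)-1) / 2 ^ (((d:ℝ)-1)/2)))) := by
  have hdm1 : (0:ℝ) < (d:ℝ) - 1 := by
    have : (2:ℝ) ≤ d := by exact_mod_cast hd
    linarith
  have hd0 : (0:ℝ) < d := by positivity
  have ha : 0 < lam ^ al := Real.rpow_pos_of_pos hlam al
  obtain ⟨hgeq, hgpos, hg1, _⟩ := gfun_facts al h lam uu hh hlam huu h1 h2 h3
  set p : ℝ := ((d:ℝ)-1)/2 with hp
  have hppos : 0 < p := by positivity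
  set G := gfun lam al uu h with hG
  set I := ∫ θ in (0:ℝ)..(Real.arccos (1 - G)), (Real.sin θ) ^ (d-2) with hI
  have hGp : (0:ℝ) < G ^ p := Real.rpow_pos_of_pos hgpos p
  have hDpos : (0:ℝ) < 1 - h / uu ^ 2 := by linarith
  have hs1 : s1 d G = (((d:ℝ) - 1) * kappa (d - 1) / ((d:ℝ) * kappa d)) * I := by
    rw [s1, if_pos (by linarith : G ≤ 2)]
  -- rewrite G^p as product
  have hRnn : 0 ≤ (1 - (1/2) * ((1 + lam ^ al) * h / (lam ^ al * uu ^ 2))) / (1 - h / uu ^ 2) := by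
    apply div_nonneg _ hDpos.le
    linarith
  have htR : G = (lam ^ al * h / uu ^ 2) *
      ((1 - (1/2) * ((1 + lam ^ al) * h / (lam ^ al * uu ^ 2))) / (1 - h / uu ^ 2)) := by
    have hane : lam ^ al ≠ 0 := ha.ne'
    have hDne : (1 : ℝ) - h / uu ^ 2 ≠ 0 := hDpos.ne'
    have huune : uu ≠ 0 := huu.ne'
    have hnum : lam ^ al / uu ^ 2 * h - (1/2) * (1 + lam ^ al) / uu ^ 4 * h ^ 2 =
        (lam ^ al * h / uu ^ 2) * (1 - (1/2) * ((1 + lam ^ al) * h / (lam ^ al * uu ^ 2))) := by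
      field_simp
    rw [hgeq, hnum, mul_div_assoc]
  have hGpow : G ^ p = (lam ^ (al * p) * h ^ p / uu ^ (d-1)) *
      ((1 - (1/2) * ((1 + lam ^ al) * h / (lam ^ al * uu ^ 2))) / (1 - h / uu ^ 2)) ^ p := by
    rw [htR, Real.mul_rpow (by positivity) hRnn, Real.div_rpow (by positivity) (by positivity),
      Real.mul_rpow ha.le hh.le, ← Real.rpow_mul hlam.le]
    congr 2
    rw [← Real.rpow_natCast uu 2, ← Real.rpow_mul huu.le, ← Real.rpow_natCast uu (d-1)]
    congr 1
    have : ((d - 1 : ℕ) : ℝ) = (d:ℝ) - 1 := by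
      push_cast [le_trans one_le_two hd]; ring
    rw [this, hp]; ring
  have hupow : uu ^ (d+1) * uu ^ (d-1) =
      ((2:ℝ) ^ p * kappa (d - 1) / ((d:ℝ) * kappa d ^ 2)) * lam ^ (1 - al * ((d:ℝ)+1)/2) := by
    rw [← pow_add, show d+1+(d-1) = 2*d by omega, hu2d, hp]
  have hlams : lam * lam ^ (al * p) / lam ^ ((d:ℝ) * al) = lam ^ (1 - al * ((d:ℝ)+1)/2) := by
    calc lam * lam ^ (al * p) / lam ^ ((d:ℝ) * al)
        = lam ^ (1:ℝ) * lam ^ (al * p) / lam ^ ((d:ℝ) * al) := by rw [Real.rpow_one]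
      _ = lam ^ (1 + al * p - (d:ℝ) * al) := by
          rw [← Real.rpow_add hlam, ← Real.rpow_sub hlam]
      _ = lam ^ (1 - al * ((d:ℝ)+1)/2) := by congr 1; rw [hp]; ring
  have hκd : 0 < kappa d := kappa_pos d
  have hκ1 : 0 < kappa (d - 1) := kappa_pos (d - 1)
  have h2p : (0:ℝ) < 2 ^ p := Real.rpow_pos_of_pos two_pos p
  have hE : (0:ℝ) < lam ^ (1 - al * ((d:ℝ)+1)/2) := Real.rpow_pos_of_pos hlam _
  have hmain : lam / uu ^ (d+1) / (kappa d * lam ^ ((d:ℝ) * al)) *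
      (((d:ℝ) - 1) * kappa (d - 1) / ((d:ℝ) * kappa d)) *
      (lam ^ (al * p) * h ^ p / uu ^ (d-1)) = h ^ p * (((d:ℝ)-1) / 2 ^ p) := by
    have step : lam / uu ^ (d+1) / (kappa d * lam ^ ((d:ℝ) * al)) *
        (((d:ℝ) - 1) * kappa (d - 1) / ((d:ℝ) * kappa d)) *
        (lam ^ (al * p) * h ^ p / uu ^ (d-1)) =
        (lam * lam ^ (al * p) / lam ^ ((d:ℝ) * al)) *
          (((d:ℝ) - 1) * kappa (d - 1) * h ^ p) /
          ((uu ^ (d+1) * uu ^ (d-1)) * (kappa d * ((d:ℝ) * kappa d))) := by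
      ring
    rw [step, hlams, hupow]
    rw [div_eq_iff]
    · field_simp
    · positivity
  -- final assembly
  rw [phi, hs1]
  rw [eq_comm, div_mul_eq_mul_div, div_eq_iff hGp.ne', hGpow]
  calc I * ((1 + lam ^ al) ^ d * (1 - h / uu ^ 2) ^ (d - 1) *
        ((1 - 1 / 2 * ((1 + lam ^ al) * h / (lam ^ al * uu ^ 2))) / (1 - h / uu ^ 2)) ^ p *
        (h ^ p * (((d:ℝ) - 1) / 2 ^ p)))
      = I * ((1 + lam ^ al) ^ d * (1 - h / uu ^ 2) ^ (d - 1) *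
        ((1 - 1 / 2 * ((1 + lam ^ al) * h / (lam ^ al * uu ^ 2))) / (1 - h / uu ^ 2)) ^ p *
        (lam / uu ^ (d+1) / (kappa d * lam ^ ((d:ℝ) * al)) *
          (((d:ℝ) - 1) * kappa (d - 1) / ((d:ℝ) * kappa d)) *
          (lam ^ (al * p) * h ^ p / uu ^ (d-1)))) := by rw [hmain]
    _ = lam * (1 + lam ^ al) ^ d / uu ^ (d + 1) / (kappa d * lam ^ ((d:ℝ) * al)) *
        (((d:ℝ) - 1) * kappa (d - 1) / ((d:ℝ) * kappa d) * I) * (1 - h / uu ^ 2) ^ (d - 1) *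
        (lam ^ (al * p) * h ^ p / uu ^ (d - 1) *
          ((1 - 1 / 2 * ((1 + lam ^ al) * h / (lam ^ al * uu ^ 2))) / (1 - h / uu ^ 2)) ^ p) := by
        ring

/-- for `α ∈ (-2/(d-1), 0)`, `β = (2-α(d+1))/(4d)`,
`C₀ = (2^{(d-1)/2} κ_{d-1}/(d κ_d²))^{1/(2d)}` and `u_λ = C₀ λ^β`,
`φ_{λ,α,u_λ}(h) → h^{(d-1)/2}` for every fixed `h ≥ 0`. -/
theorem phi_limit_neg_subcritical (d : ℕ) (hd : 2 ≤ d) (al : ℝ)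
    (hal0 : -2 / ((d : ℝ) - 1) < al) (hal1 : al < 0) (h : ℝ) (hh : 0 ≤ h) :
    Tendsto (fun lam : ℝ =>
        phi d lam al
          (((2 : ℝ) ^ (((d : ℝ) - 1) / 2) * kappa (d - 1) / ((d : ℝ) * kappa d ^ 2)) ^
              ((1 : ℝ) / (2 * (d : ℝ))) *
            lam ^ ((2 - al * ((d : ℝ) + 1)) / (4 * (d : ℝ)))) h)
      atTop (nhds (h ^ (((d : ℝ) - 1) / 2))) := by
  have hdm1 : (0:ℝ) < (d:ℝ) - 1 := by
    have : (2:ℝ) ≤ d := by exact_mod_cast hd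
    linarith
  have hd0 : (0:ℝ) < d := by positivity
  set p : ℝ := ((d:ℝ)-1)/2 with hp
  have hppos : 0 < p := by positivity
  rcases eq_or_lt_of_le hh with hh0 | hhpos
  · -- h = 0
    rw [← hh0]
    simp only [phi, gfun, s1]
    norm_num [Real.arccos_one, intervalIntegral.integral_same,
      Real.zero_rpow (ne_of_gt hppos)]
  -- main case h > 0
  have hκd : 0 < kappa d := kappa_pos d
  have hκ1 : 0 < kappa (d - 1) := kappa_pos (d - 1)
  set X : ℝ := (2:ℝ) ^ p * kappa (d - 1) / ((d:ℝ) * kappa d ^ 2) with hX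
  have hXpos : 0 < X := by
    have : (0:ℝ) < (2:ℝ) ^ p := Real.rpow_pos_of_pos two_pos p
    positivity
  set C0 : ℝ := X ^ ((1:ℝ)/(2*(d:ℝ))) with hC0
  have hC0pos : 0 < C0 := Real.rpow_pos_of_pos hXpos _
  set β : ℝ := (2 - al * ((d:ℝ)+1)) / (4 * (d:ℝ)) with hβ
  have hβpos : 0 < β := by
    apply div_pos _ (by positivity)
    nlinarith
  set u : ℝ → ℝ := fun lam => C0 * lam ^ β with hu
  have hab : 0 < al + 2 * β := by
    have h2 : -2 < al * ((d:ℝ)-1) := (div_lt_iff₀ hdm1).mp hal0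
    have : al + 2 * β = (al * ((d:ℝ)-1) + 2) / (2 * (d:ℝ)) := by
      rw [hβ]; field_simp; ring
    rw [this]; apply div_pos (by linarith) (by positivity)
  -- limits
  have Ta : Tendsto (fun lam : ℝ => lam ^ al) atTop (nhds 0) := by
    have := tendsto_rpow_neg_atTop (y := -al) (by linarith)
    simpa using this
  have Tu : Tendsto u atTop atTop :=
    (tendsto_rpow_atTop hβpos).const_mul_atTop hC0pos
  have Tu2 : Tendsto (fun lam : ℝ => u lam ^ 2) atTop atTop :=
    (tendsto_pow_atTop two_ne_zero).comp Tu
  have Tiu2 : Tendsto (fun lam : ℝ => h / u lam ^ 2) atTop (nhds 0) :=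
    tendsto_const_nhds.div_atTop Tu2
  have Tt : Tendsto (fun lam : ℝ => lam ^ al / u lam ^ 2 * h) atTop (nhds 0) := by
    have := Ta.mul Tiu2
    rw [zero_mul] at this
    exact this.congr (fun lam => by ring)
  have TatTop : Tendsto (fun lam : ℝ => lam ^ al * u lam ^ 2) atTop atTop := by
    have hev : ∀ᶠ lam in (atTop : Filter ℝ), C0 ^ 2 * lam ^ (al + 2*β) = lam ^ al * u lam ^ 2 := by
      filter_upwards [eventually_gt_atTop (0:ℝ)] with lam hlam
      rw [hu]
      simp only
      rw [mul_pow, ← Real.rpow_natCast (lam ^ β) 2, ← Real.rpow_mul hlam.le]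
      rw [show al + 2*β = al + β * (2:ℕ) by push_cast; ring, Real.rpow_add hlam]
      ring
    exact Tendsto.congr' hev (((tendsto_rpow_atTop hab).const_mul_atTop (by positivity)))
  have Tinv : Tendsto (fun lam : ℝ => (lam ^ al * u lam ^ 2)⁻¹) atTop (nhds 0) :=
    TatTop.inv_tendsto_atTop
  have TB : Tendsto (fun lam : ℝ => (1 + lam ^ al) * h / (lam ^ al * u lam ^ 2))
      atTop (nhds 0) := by
    have := ((Ta.const_add 1).mul_const h).mul Tinv
    rw [mul_zero] at this
    exact this.congr (fun lam => by rw [div_eq_mul_inv])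
  -- the eventual good-behaviour set
  have hEv : ∀ᶠ lam in (atTop : Filter ℝ), 0 < lam ∧ 0 < u lam ∧
      h / u lam ^ 2 < 1/2 ∧ (1 + lam ^ al) * h / (lam ^ al * u lam ^ 2) < 1 ∧
      2 * (lam ^ al / u lam ^ 2 * h) < 1 := by
    have e1 := eventually_gt_atTop (0:ℝ)
    have e2 := Tiu2.eventually_lt_const (by norm_num : (0:ℝ) < 1/2)
    have e3 := TB.eventually_lt_const (by norm_num : (0:ℝ) < 1)
    have e4 : Tendsto (fun lam : ℝ => 2 * (lam ^ al / u lam ^ 2 * h)) atTop (nhds 0) := by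
      have := Tt.const_mul (2:ℝ); rwa [mul_zero] at this
    have e4' := e4.eventually_lt_const (by norm_num : (0:ℝ) < 1)
    filter_upwards [e1, e2, e3, e4'] with lam h1 h2 h3 h4
    have : 0 < u lam := by
      rw [hu]; exact mul_pos hC0pos (Real.rpow_pos_of_pos h1 β)
    exact ⟨h1, this, h2, h3, h4⟩
  -- G tends to 0 from the right
  set G : ℝ → ℝ := fun lam => gfun lam al (u lam) h with hGdef
  have TG : Tendsto G atTop (nhdsWithin 0 (Set.Ioi 0)) := by
    rw [tendsto_nhdsWithin_iff]
    constructor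
    · apply squeeze_zero' (Eventually.of_forall fun lam => gfun_nonneg _ _ _ _)
        (g := fun lam : ℝ => 2 * (lam ^ al / u lam ^ 2 * h))
      · filter_upwards [hEv] with lam ⟨h1, h2, h3, h4, h5⟩
        exact (gfun_facts al h lam (u lam) hhpos h1 h2 h3 h4 h5).2.2.2
      · have := Tt.const_mul (2:ℝ); rwa [mul_zero] at this
    · filter_upwards [hEv] with lam ⟨h1, h2, h3, h4, h5⟩
      exact (gfun_facts al h lam (u lam) hhpos h1 h2 h3 h4 h5).2.1
  have TF1 : Tendsto (fun lam : ℝ =>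
      (∫ θ in (0:ℝ)..(Real.arccos (1 - G lam)), (Real.sin θ) ^ (d-2)) / (G lam) ^ p)
      atTop (nhds ((2:ℝ) ^ p / ((d:ℝ)-1))) := (ratio_lim d hd).comp TG
  have TK : Tendsto (fun lam : ℝ =>
      (1 + lam ^ al) ^ d * (1 - h / u lam ^ 2) ^ (d-1) *
        ((1 - (1/2) * ((1 + lam ^ al) * h / (lam ^ al * u lam ^ 2))) / (1 - h / u lam ^ 2)) ^ p *
        (h ^ p * (((d:ℝ)-1) / 2 ^ p))) atTop
      (nhds (h ^ p * (((d:ℝ)-1) / 2 ^ p))) := by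
    have t1 : Tendsto (fun lam : ℝ => (1 + lam ^ al) ^ d) atTop (nhds 1) := by
      have := (Ta.const_add 1).pow d
      simpa using this
    have t2 : Tendsto (fun lam : ℝ => (1 - h / u lam ^ 2) ^ (d-1)) atTop (nhds 1) := by
      have := ((tendsto_const_nhds (x := (1:ℝ))).sub Tiu2).pow (d-1)
      simpa using this
    have t3 : Tendsto (fun lam : ℝ =>
        ((1 - (1/2) * ((1 + lam ^ al) * h / (lam ^ al * u lam ^ 2))) / (1 - h / u lam ^ 2)) ^ p)
        atTop (nhds 1) := by
      have tb2 : Tendsto (fun lam : ℝ =>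
          (1/2) * ((1 + lam ^ al) * h / (lam ^ al * u lam ^ 2))) atTop (nhds 0) := by
        have := TB.const_mul (1/2:ℝ); rwa [mul_zero] at this
      have tq : Tendsto (fun lam : ℝ =>
          (1 - (1/2) * ((1 + lam ^ al) * h / (lam ^ al * u lam ^ 2))) / (1 - h / u lam ^ 2))
          atTop (nhds 1) := by
        have := ((tendsto_const_nhds (x := (1:ℝ))).sub tb2).div
          ((tendsto_const_nhds (x := (1:ℝ))).sub Tiu2) (by norm_num : (1:ℝ) - 0 ≠ 0)
        convert this using 2 <;> norm_num
      have := tq.rpow_const (p := p) (Or.inl one_ne_zero)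
      rwa [Real.one_rpow] at this
    have := ((t1.mul t2).mul t3).mul_const (h ^ p * (((d:ℝ)-1) / 2 ^ p))
    simpa using this
  have key : (fun lam : ℝ => phi d lam al (u lam) h) =ᶠ[atTop]
      (fun lam : ℝ =>
        ((∫ θ in (0:ℝ)..(Real.arccos (1 - G lam)), (Real.sin θ) ^ (d-2)) / (G lam) ^ p) *
        ((1 + lam ^ al) ^ d * (1 - h / u lam ^ 2) ^ (d-1) *
          ((1 - (1/2) * ((1 + lam ^ al) * h / (lam ^ al * u lam ^ 2))) / (1 - h / u lam ^ 2)) ^ p *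
          (h ^ p * (((d:ℝ)-1) / 2 ^ p)))) := by
    filter_upwards [hEv] with lam ⟨h1, h2, h3, h4, h5⟩
    have hC2d : C0 ^ (2*d) = X := by
      rw [hC0, ← Real.rpow_natCast (X ^ ((1:ℝ)/(2*(d:ℝ)))) (2*d), ← Real.rpow_mul hXpos.le,
        show (1:ℝ)/(2*(d:ℝ)) * ((2*d : ℕ):ℝ) = 1 by push_cast; field_simp]
      exact Real.rpow_one X
    have hv2d : (lam ^ β) ^ (2*d) = lam ^ (1 - al*((d:ℝ)+1)/2) := by
      rw [← Real.rpow_natCast (lam ^ β) (2*d), ← Real.rpow_mul h1.le]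
      congr 1
      rw [hβ]; push_cast; field_simp; ring
    have hu2d : u lam ^ (2*d) = X * lam ^ (1 - al*((d:ℝ)+1)/2) := by
      rw [hu]; simp only; rw [mul_pow, hC2d, hv2d]
    exact phi_eq d hd al h lam (u lam) hhpos h1 h2 h3 h4 h5 hu2d
  have Tfinal := TF1.mul TK
  have hlim : (2:ℝ) ^ p / ((d:ℝ)-1) * (h ^ p * (((d:ℝ)-1) / 2 ^ p)) = h ^ p := by
    have h2p : (0:ℝ) < 2 ^ p := Real.rpow_pos_of_pos two_pos p
    field_simp
  rw [hlim] at Tfinal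
  exact Tfinal.congr' key.symm
end
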